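/- For any positive integer $n$, $m \in (0,1)$, $b \in [m,1)$, and $y \ge 0$: $\log\left(b\frac{y}{m} + (1-b)\frac{1-y}{1-m}\right) \ge \sum_{k=1}^{2n-1} \frac{1}{k}\left(1 - \frac{1-b}{1-m}\right)^k \left\{\left(1-\frac{y}{m}\right)^{2n} - \left(1-\frac{y}{m}\right)^k\right\} + \left(1-\frac{y}{m}\right)^{2n} \log\frac{1-b}{1-m}$ (provided the argument of the outer logarithm is positive). -/

import Mathlib

open Set

noncomputable def gfun (K : ℕ) (t : ℝ) : ℝ :=
  Real.log (1 + t) - ∑ k ∈ Finset.Icc 1 K, (-1 : ℝ) ^ (k + 1) * t ^ k / k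

noncomputable def phifun (K : ℕ) (t : ℝ) : ℝ :=
  -(t ^ (K + 1)) / (1 + t) - ((K : ℝ) + 1) * gfun K t

noncomputable def psifun (K : ℕ) (t : ℝ) : ℝ :=
  ((K : ℝ) + 1) * gfun K t + t ^ (K + 1)

lemma gfun_zero (K : ℕ) : gfun K 0 = 0 := by
  have h : ∑ k ∈ Finset.Icc 1 K, (-1 : ℝ) ^ (k + 1) * (0:ℝ) ^ k / k = 0 := by
    apply Finset.sum_eq_zero
    intro k hk
    rw [Finset.mem_Icc] at hk
    rw [zero_pow (by omega : k ≠ 0)]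
    ring
  simp [gfun, h]

lemma gfun_hasDerivAt (K : ℕ) {t : ℝ} (ht : -1 < t) :
    HasDerivAt (gfun K) ((-t) ^ K / (1 + t)) t := by
  have h0 : (1 : ℝ) + t ≠ 0 := by linarith
  have hlog : HasDerivAt (fun s : ℝ => Real.log (1 + s)) (1 / (1 + t)) t := by
    exact ((Real.hasDerivAt_log h0).comp t ((hasDerivAt_id t).const_add 1)).congr_deriv (by simp)
  have hsum : HasDerivAt (fun s : ℝ => ∑ k ∈ Finset.Icc 1 K, (-1 : ℝ) ^ (k + 1) * s ^ k / k)
      (∑ k ∈ Finset.Icc 1 K, (-1 : ℝ) ^ (k + 1) * t ^ (k - 1)) t := by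
    apply HasDerivAt.fun_sum
    intro k hk
    rw [Finset.mem_Icc] at hk
    have hk0 : (k : ℝ) ≠ 0 := Nat.cast_ne_zero.mpr (by omega)
    have heq : (fun s : ℝ => (-1 : ℝ) ^ (k + 1) * s ^ k / k)
        = fun s : ℝ => ((-1 : ℝ) ^ (k + 1) / k) * s ^ k := by
      funext s; ring
    rw [heq]
    have := (hasDerivAt_pow k t).const_mul ((-1 : ℝ) ^ (k + 1) / (k : ℝ))
    refine this.congr_deriv ?_
    field_simp
  have hre : (∑ k ∈ Finset.Icc 1 K, (-1 : ℝ) ^ (k + 1) * t ^ (k - 1))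
      = ∑ j ∈ Finset.range K, (-t) ^ j := by
    rw [← Finset.Ico_add_one_right_eq_Icc, Finset.sum_Ico_eq_sum_range]
    apply Finset.sum_congr (by norm_num) ?_
    intro j _
    have h1 : 1 + j + 1 = j + 2 := by omega
    have h2 : 1 + j - 1 = j := by omega
    rw [h1, h2, neg_pow, pow_add]
    ring
  have := hlog.sub hsum
  rw [hre] at this
  refine this.congr_deriv ?_
  have h0' : -t - 1 ≠ 0 := by intro h; apply h0; linarith
  rw [geom_sum_eq (by intro hcon; linarith : (-t : ℝ) ≠ 1) K]
  field_simp
  ring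

lemma phifun_hasDerivAt (K : ℕ) (hK : Odd K) {t : ℝ} (ht : -1 < t) :
    HasDerivAt (phifun K) (t ^ (K + 1) / (1 + t) ^ 2) t := by
  have h0 : (1 : ℝ) + t ≠ 0 := by linarith
  have h1 : HasDerivAt (fun s : ℝ => -(s ^ (K + 1)) / (1 + s))
      ((-(((K:ℝ) + 1) * t ^ K) * (1 + t) - -(t ^ (K + 1)) * 1) / (1 + t) ^ 2) t := by
    have hp : HasDerivAt (fun s : ℝ => -(s ^ (K + 1))) (-(((K:ℝ) + 1) * t ^ K)) t := by
      have := (hasDerivAt_pow (K + 1) t).neg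
      simp at this; exact this
    exact hp.div ((hasDerivAt_id t).const_add 1) h0
  have h2 : HasDerivAt (fun s : ℝ => ((K : ℝ) + 1) * gfun K s)
      (((K : ℝ) + 1) * ((-t) ^ K / (1 + t))) t := (gfun_hasDerivAt K ht).const_mul _
  have := h1.sub h2
  have hodd : (-t) ^ K = -(t ^ K) := Odd.neg_pow hK t
  refine this.congr_deriv ?_
  rw [hodd]
  field_simp
  ring

lemma psifun_hasDerivAt (K : ℕ) (hK : Odd K) {t : ℝ} (ht : -1 < t) :
    HasDerivAt (psifun K) (((K : ℝ) + 1) * t ^ (K + 1) / (1 + t)) t := by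
  have h0 : (1 : ℝ) + t ≠ 0 := by linarith
  have h2 : HasDerivAt (fun s : ℝ => ((K : ℝ) + 1) * gfun K s)
      (((K : ℝ) + 1) * ((-t) ^ K / (1 + t))) t := (gfun_hasDerivAt K ht).const_mul _
  have hp : HasDerivAt (fun s : ℝ => s ^ (K + 1)) (((K:ℝ) + 1) * t ^ K) t := by
    simpa using hasDerivAt_pow (K + 1) t
  have := h2.add hp
  have hodd : (-t) ^ K = -(t ^ K) := Odd.neg_pow hK t
  refine this.congr_deriv ?_
  rw [hodd]
  field_simp
  ring

lemma phifun_zero (K : ℕ) : phifun K 0 = 0 := by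
  simp [phifun, gfun_zero]

lemma psifun_zero (K : ℕ) : psifun K 0 = 0 := by
  simp [psifun, gfun_zero]

lemma phifun_mono (K : ℕ) (hK : Odd K) : MonotoneOn (phifun K) (Set.Ioi (-1 : ℝ)) := by
  apply monotoneOn_of_deriv_nonneg (convex_Ioi _)
  · intro x hx
    exact (phifun_hasDerivAt K hK hx).continuousAt.continuousWithinAt
  · intro x hx
    rw [interior_Ioi] at hx
    exact (phifun_hasDerivAt K hK hx).differentiableAt.differentiableWithinAt
  · intro x hx
    rw [interior_Ioi] at hx
    rw [(phifun_hasDerivAt K hK hx).deriv]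
    have := hK.add_one.pow_nonneg x
    positivity

lemma psifun_mono (K : ℕ) (hK : Odd K) : MonotoneOn (psifun K) (Set.Ioi (-1 : ℝ)) := by
  apply monotoneOn_of_deriv_nonneg (convex_Ioi _)
  · intro x hx
    exact (psifun_hasDerivAt K hK hx).continuousAt.continuousWithinAt
  · intro x hx
    rw [interior_Ioi] at hx
    exact (psifun_hasDerivAt K hK hx).differentiableAt.differentiableWithinAt
  · intro x hx
    rw [interior_Ioi] at hx
    rw [(psifun_hasDerivAt K hK hx).deriv]
    have h1 := hK.add_one.pow_nonneg x
    have h2 : (0:ℝ) < 1 + x := by rw [Set.mem_Ioi] at hx; linarith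
    positivity

lemma phifun_nonpos (K : ℕ) (hK : Odd K) {t : ℝ} (ht : -1 < t) (ht0 : t ≤ 0) :
    phifun K t ≤ 0 := by
  have := phifun_mono K hK ht (by norm_num : (0:ℝ) ∈ Set.Ioi (-1:ℝ)) ht0
  rwa [phifun_zero] at this

lemma psifun_nonpos (K : ℕ) (hK : Odd K) {t : ℝ} (ht : -1 < t) (ht0 : t ≤ 0) :
    psifun K t ≤ 0 := by
  have := psifun_mono K hK ht (by norm_num : (0:ℝ) ∈ Set.Ioi (-1:ℝ)) ht0
  rwa [psifun_zero] at this

lemma psifun_nonneg (K : ℕ) (hK : Odd K) {t : ℝ} (ht0 : 0 ≤ t) :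
    0 ≤ psifun K t := by
  have := psifun_mono K hK (by norm_num : (0:ℝ) ∈ Set.Ioi (-1:ℝ))
    (by simp; linarith : t ∈ Set.Ioi (-1:ℝ)) ht0
  rwa [psifun_zero] at this

lemma ffun_hasDerivAt (K : ℕ) (hK : Odd K) {t : ℝ} (ht : -1 < t) (ht0 : t < 0) :
    HasDerivAt (fun s : ℝ => gfun K s / s ^ (K + 1)) (phifun K t / t ^ (K + 2)) t := by
  have h0 : (1 : ℝ) + t ≠ 0 := by linarith
  have htne : t ≠ 0 := ne_of_lt ht0
  have hp : HasDerivAt (fun s : ℝ => s ^ (K + 1)) (((K:ℝ) + 1) * t ^ K) t := by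
    simpa using hasDerivAt_pow (K + 1) t
  have := (gfun_hasDerivAt K ht).div hp (pow_ne_zero _ htne)
  refine this.congr_deriv ?_
  rw [Odd.neg_pow hK t]
  rw [phifun]
  field_simp
  ring

lemma ffun_mono (K : ℕ) (hK : Odd K) :
    MonotoneOn (fun s : ℝ => gfun K s / s ^ (K + 1)) (Set.Ioo (-1 : ℝ) 0) := by
  apply monotoneOn_of_deriv_nonneg (convex_Ioo _ _)
  · intro x hx
    exact (ffun_hasDerivAt K hK hx.1 hx.2).continuousAt.continuousWithinAt
  · intro x hx
    rw [interior_Ioo] at hx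
    exact (ffun_hasDerivAt K hK hx.1 hx.2).differentiableAt.differentiableWithinAt
  · intro x hx
    rw [interior_Ioo] at hx
    rw [(ffun_hasDerivAt K hK hx.1 hx.2).deriv]
    rw [div_nonneg_iff]
    right
    constructor
    · exact phifun_nonpos K hK hx.1 (le_of_lt hx.2)
    · exact le_of_lt (Odd.pow_neg (by rcases hK with ⟨r, hr⟩; exact ⟨r + 1, by omega⟩) hx.2)

lemma main_ineq (K : ℕ) (hK : Odd K) (x0 : ℝ) (hx0 : -1 < x0) (hx0' : x0 ≤ 0)
    (u : ℝ) (hu : u ≤ 1) (h1 : -1 < u * x0) :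
    u ^ (K + 1) * gfun K x0 ≤ gfun K (u * x0) := by
  rcases eq_or_lt_of_le hx0' with h | h
  · rw [h, mul_zero, gfun_zero, mul_zero]
  have hKe : Even (K + 1) := hK.add_one
  have hx0p : (0:ℝ) < x0 ^ (K + 1) := hKe.pow_pos (ne_of_lt h)
  have hx : x0 ≤ u * x0 := by nlinarith
  by_cases hxs : 0 ≤ u * x0
  · -- x = u*x0 ≥ 0 : use psifun bounds
    have h2 := psifun_nonneg K hK hxs
    have h3 := psifun_nonpos K hK hx0 hx0'
    rw [psifun] at h2 h3
    have hun : (0:ℝ) ≤ u ^ (K + 1) := hKe.pow_nonneg u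
    have hKpos : (0:ℝ) < (K:ℝ) + 1 := by positivity
    have step1 : ((K:ℝ) + 1) * (u ^ (K + 1) * gfun K x0) ≤ -((u * x0) ^ (K + 1)) := by
      have hmul := mul_le_mul_of_nonneg_left
        (show ((K:ℝ) + 1) * gfun K x0 ≤ -(x0 ^ (K + 1)) by linarith) hun
      have hpow : u ^ (K + 1) * x0 ^ (K + 1) = (u * x0) ^ (K + 1) := (mul_pow u x0 _).symm
      nlinarith [hmul]
    refine le_of_mul_le_mul_left ?_ hKpos
    linarith
  · -- x = u*x0 < 0 : use monotonicity of g t / t^(K+1)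
    push_neg at hxs
    have hf := ffun_mono K hK (Set.mem_Ioo.mpr ⟨hx0, h⟩) (Set.mem_Ioo.mpr ⟨h1, hxs⟩) hx
    have hxp : (0:ℝ) < (u * x0) ^ (K + 1) := hKe.pow_pos (ne_of_lt hxs)
    rw [div_le_div_iff₀ hx0p hxp] at hf
    refine le_of_mul_le_mul_left ?_ hx0p
    calc x0 ^ (K + 1) * (u ^ (K + 1) * gfun K x0)
        = gfun K x0 * (u * x0) ^ (K + 1) := by rw [mul_pow]; ring
      _ ≤ gfun K (u * x0) * x0 ^ (K + 1) := hf
      _ = x0 ^ (K + 1) * gfun K (u * x0) := by ring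

/-- Higher-order lower bound on the log-wealth (Lemma 4.5, first case): for
`n ≥ 1`, `m ∈ (0,1)`, `b ∈ [m,1)`, and `y ≥ 0` (with the argument of the outer
logarithm positive),
`log(b y/m + (1-b)(1-y)/(1-m)) ≥ ∑_{k=1}^{2n-1} (1/k)(1-(1-b)/(1-m))^k
  {(1-y/m)^{2n} - (1-y/m)^k} + (1-y/m)^{2n} log((1-b)/(1-m))`. -/
theorem log_wealth_lower_bound (n : ℕ) (hn : 1 ≤ n)
    (m : ℝ) (hm : m ∈ Set.Ioo (0 : ℝ) 1)
    (b : ℝ) (hb : b ∈ Set.Ico m 1) (y : ℝ) (hy : 0 ≤ y)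
    (hpos : 0 < b * (y / m) + (1 - b) * ((1 - y) / (1 - m))) :
    (∑ k ∈ Finset.Icc 1 (2 * n - 1),
        (1 / (k : ℝ)) * (1 - (1 - b) / (1 - m)) ^ k *
          ((1 - y / m) ^ (2 * n) - (1 - y / m) ^ k)) +
      (1 - y / m) ^ (2 * n) * Real.log ((1 - b) / (1 - m)) ≤
    Real.log (b * (y / m) + (1 - b) * ((1 - y) / (1 - m))) := by
  obtain ⟨hm0, hm1⟩ := hm
  obtain ⟨hbm, hb1⟩ := hb
  have hm0' : m ≠ 0 := ne_of_gt hm0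
  have hm1' : (1:ℝ) - m ≠ 0 := by intro h; apply absurd hm1; intro _; linarith
  set K : ℕ := 2 * n - 1 with hKdef
  have hK2n : K + 1 = 2 * n := by omega
  have hK : Odd K := ⟨n - 1, by omega⟩
  set u : ℝ := 1 - y / m with hudef
  set x0 : ℝ := (m - b) / (1 - m) with hx0def
  have hc : 1 + x0 = (1 - b) / (1 - m) := by
    rw [hx0def]; field_simp; ring
  have harg : b * (y / m) + (1 - b) * ((1 - y) / (1 - m)) = 1 + u * x0 := by
    rw [hudef, hx0def]; field_simp; ring
  have hx0 : -1 < x0 := by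
    rw [hx0def, neg_lt, ← neg_div]
    rw [div_lt_one (by linarith : (0:ℝ) < 1 - m)]
    linarith
  have hx0' : x0 ≤ 0 := by
    rw [hx0def]
    apply div_nonpos_of_nonpos_of_nonneg (by linarith) (by linarith)
  have hu : u ≤ 1 := by
    rw [hudef]
    have : 0 ≤ y / m := div_nonneg hy (le_of_lt hm0)
    linarith
  have h1 : -1 < u * x0 := by
    have h := hpos
    rw [harg] at h
    linarith
  have H := main_ineq K hK x0 hx0 hx0' u hu h1
  rw [gfun, gfun, mul_sub] at H
  have h1mc : 1 - (1 - b) / (1 - m) = -x0 := by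
    rw [hx0def]; field_simp; ring
  have hsum : (∑ k ∈ Finset.Icc 1 (2 * n - 1),
        (1 / (k : ℝ)) * (1 - (1 - b) / (1 - m)) ^ k *
          ((1 - y / m) ^ (2 * n) - (1 - y / m) ^ k))
      = (∑ k ∈ Finset.Icc 1 K, (-1 : ℝ) ^ (k + 1) * (u * x0) ^ k / k)
        - u ^ (K + 1) * ∑ k ∈ Finset.Icc 1 K, (-1 : ℝ) ^ (k + 1) * x0 ^ k / k := by
    rw [Finset.mul_sum, ← Finset.sum_sub_distrib]
    apply Finset.sum_congr (by rw [hKdef])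
    intro k _
    rw [h1mc, ← hudef, hK2n, neg_pow, mul_pow]
    ring
  rw [hsum, harg, ← hc, ← hK2n]
  linarith
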